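/- arXiv:1310.8472 — 3 statements merged into one kernel-verified Lean document; each statement's English description precedes it below -/
import Mathlib

section
/- Let U ⊆ ℂ be open, f, g : ℂ → ℂ holomorphic on U, p ∈ U with g′(p) ≠ 0 and Im R(p) ≠ 0, where R = f′/g′. Let χ(z) = (Re f(z), Re g(z)), let W ⊆ ℝ² be open with χ(p) ∈ W, and let ψ : W → U be continuous at χ(p) with ψ(χ(p)) = p and χ(ψ(x)) = x for all x ∈ W. Then the map Φ : W → ℝ², Φ(x) = (−Im g(ψ(x)), Im f(ψ(x))), is differentiable at x⁰ = χ(p) and its derivative is represented by the symmetric matrix (1/Im R(p))·[[1, −Re R(p)],[−Re R(p), |R(p)|²]], which has determinant 1 and is positive definite when Im R(p) > 0. -/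
open Complex Matrix

/-- The explicit inverse of the real-linear map `v ↦ ((F'·v).re, (G'·v).re)`,
as a continuous linear map, given coefficients `a b c d` and nonzero `Δ = bc - ad`. -/
noncomputable def ronkinAinv (a b c d Δ : ℝ) : (ℝ × ℝ) →L[ℝ] ℂ :=
  LinearMap.toContinuousLinearMap
    { toFun := fun u => ⟨(-d * u.1 + b * u.2) / Δ, (-c * u.1 + a * u.2) / Δ⟩
      map_add' := by
        intro u v
        apply Complex.ext <;> simp <;> ring
      map_smul' := by
        intro r u
        apply Complex.ext <;> simp [Complex.smul_re, Complex.smul_im] <;> ring }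

theorem ronkinAinv_apply (a b c d Δ : ℝ) (u : ℝ × ℝ) :
    ronkinAinv a b c d Δ u = ⟨(-d * u.1 + b * u.2) / Δ, (-c * u.1 + a * u.2) / Δ⟩ := rfl

set_option maxHeartbeats 1000000 in
/-- Local form of the Hessian computation for the generalized Ronkin function:
with `R = f'/g'`, `χ(z) = (Re f z, Re g z)` and `ψ` a local right inverse of `χ`
near `χ(p)`, the map `Φ(x) = (−Im g(ψ x), Im f(ψ x))` is differentiable at `χ(p)`
with derivative represented by the symmetric matrix
`(1/Im R(p)) • [[1, −Re R(p)], [−Re R(p), |R(p)|²]]`, which has determinant `1` and is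
positive definite when `Im R(p) > 0`. -/
theorem conjugate_map_fderiv_matrix
    (U : Set ℂ) (hU : IsOpen U) (f g : ℂ → ℂ)
    (hf : DifferentiableOn ℂ f U) (hg : DifferentiableOn ℂ g U)
    (p : ℂ) (hp : p ∈ U) (hg' : deriv g p ≠ 0)
    (hR : (deriv f p / deriv g p).im ≠ 0)
    (W : Set (ℝ × ℝ)) (hW : IsOpen W) (hxW : ((f p).re, (g p).re) ∈ W)
    (ψ : ℝ × ℝ → ℂ) (hψU : ∀ x ∈ W, ψ x ∈ U)
    (hψc : ContinuousAt ψ ((f p).re, (g p).re))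
    (hψp : ψ ((f p).re, (g p).re) = p)
    (hψχ : ∀ x ∈ W, ((f (ψ x)).re, (g (ψ x)).re) = x) :
    ∃ L : ℝ × ℝ →L[ℝ] ℝ × ℝ,
      HasFDerivAt (fun x : ℝ × ℝ => (-(g (ψ x)).im, (f (ψ x)).im)) L
          ((f p).re, (g p).re) ∧
      (∀ v : ℝ × ℝ,
        L v =
          ((((deriv f p / deriv g p).im)⁻¹ •
              !![1, -(deriv f p / deriv g p).re;
                 -(deriv f p / deriv g p).re, ‖deriv f p / deriv g p‖ ^ 2]) 0 0 * v.1 +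
            (((deriv f p / deriv g p).im)⁻¹ •
              !![1, -(deriv f p / deriv g p).re;
                 -(deriv f p / deriv g p).re, ‖deriv f p / deriv g p‖ ^ 2]) 0 1 * v.2,
           (((deriv f p / deriv g p).im)⁻¹ •
              !![1, -(deriv f p / deriv g p).re;
                 -(deriv f p / deriv g p).re, ‖deriv f p / deriv g p‖ ^ 2]) 1 0 * v.1 +
            (((deriv f p / deriv g p).im)⁻¹ •
              !![1, -(deriv f p / deriv g p).re;
                 -(deriv f p / deriv g p).re, ‖deriv f p / deriv g p‖ ^ 2]) 1 1 * v.2)) ∧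
      ((((deriv f p / deriv g p).im)⁻¹ •
          !![1, -(deriv f p / deriv g p).re;
             -(deriv f p / deriv g p).re, ‖deriv f p / deriv g p‖ ^ 2])ᵀ =
        (((deriv f p / deriv g p).im)⁻¹ •
          !![1, -(deriv f p / deriv g p).re;
             -(deriv f p / deriv g p).re, ‖deriv f p / deriv g p‖ ^ 2])) ∧
      ((((deriv f p / deriv g p).im)⁻¹ •
          !![1, -(deriv f p / deriv g p).re;
             -(deriv f p / deriv g p).re, ‖deriv f p / deriv g p‖ ^ 2]) :
            Matrix (Fin 2) (Fin 2) ℝ).det = 1 ∧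
      (0 < (deriv f p / deriv g p).im →
        ((((deriv f p / deriv g p).im)⁻¹ •
            !![1, -(deriv f p / deriv g p).re;
               -(deriv f p / deriv g p).re, ‖deriv f p / deriv g p‖ ^ 2]) :
              Matrix (Fin 2) (Fin 2) ℝ).PosDef) := by
  set F' := deriv f p with hF'
  set G' := deriv g p with hG'
  set a := F'.re with ha
  set b := F'.im with hb
  set c := G'.re with hc
  set d := G'.im with hd
  -- basic nonvanishing facts
  have hN : c ^ 2 + d ^ 2 ≠ 0 := by
    have h : Complex.normSq G' ≠ 0 := mt Complex.normSq_eq_zero.mp hg'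
    rw [Complex.normSq_apply] at h
    intro h0; exact h (by nlinarith)
  have him : (F' / G').im = (b * c - a * d) / (c ^ 2 + d ^ 2) := by
    rw [Complex.div_im, Complex.normSq_apply]; ring
  have hre : (F' / G').re = (a * c + b * d) / (c ^ 2 + d ^ 2) := by
    rw [Complex.div_re, Complex.normSq_apply]; ring
  have habs : ‖F' / G'‖ ^ 2 = (a ^ 2 + b ^ 2) / (c ^ 2 + d ^ 2) := by
    rw [Complex.sq_norm, Complex.normSq_div, Complex.normSq_apply, Complex.normSq_apply]; ring
  have hΔ : b * c - a * d ≠ 0 := by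
    intro h0; apply hR; rw [him, h0, zero_div]
  -- complex derivatives as real fderivs
  have hfd : HasDerivAt f F' p := (hf.differentiableAt (hU.mem_nhds hp)).hasDerivAt
  have hgd : HasDerivAt g G' p := (hg.differentiableAt (hU.mem_nhds hp)).hasDerivAt
  set F : ℂ →L[ℝ] ℂ :=
    ((ContinuousLinearMap.id ℂ ℂ).smulRight F').restrictScalars ℝ with hFdef
  set G : ℂ →L[ℝ] ℂ :=
    ((ContinuousLinearMap.id ℂ ℂ).smulRight G').restrictScalars ℝ with hGdef
  have hF : HasFDerivAt f F p := hfd.hasFDerivAt.restrictScalars ℝ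
  have hG : HasFDerivAt g G p := hgd.hasFDerivAt.restrictScalars ℝ
  have hFapp : ∀ v : ℂ, F v = v * F' := fun v => by
    simp [hFdef, smul_eq_mul]
  have hGapp : ∀ v : ℂ, G v = v * G' := fun v => by
    simp [hGdef, smul_eq_mul]
  -- the derivative of χ and its inverse
  set A : ℂ →L[ℝ] ℝ × ℝ := (Complex.reCLM.comp F).prod (Complex.reCLM.comp G) with hAdef
  set Ainv : (ℝ × ℝ) →L[ℝ] ℂ := ronkinAinv a b c d (b * c - a * d) with hAinvdef
  have hAapp : ∀ v : ℂ, A v = (v.re * a - v.im * b, v.re * c - v.im * d) := fun v => by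
    simp [hAdef, hFapp, hGapp, Complex.mul_re, ha, hb, hc, hd]
  have left_inv : Function.LeftInverse Ainv A := by
    intro v
    rw [hAapp, hAinvdef, ronkinAinv_apply]
    apply Complex.ext <;> dsimp only <;> rw [div_eq_iff hΔ] <;> ring
  have right_inv : Function.RightInverse Ainv A := by
    intro u
    rw [hAinvdef, ronkinAinv_apply, hAapp]
    apply Prod.ext <;> dsimp only <;>
      rw [div_mul_eq_mul_div, div_mul_eq_mul_div, div_sub_div_same, div_eq_iff hΔ] <;> ring
  set E : ℂ ≃L[ℝ] ℝ × ℝ := ContinuousLinearEquiv.equivOfInverse A Ainv left_inv right_inv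
    with hEdef
  have hAχ : HasFDerivAt (fun z : ℂ => ((f z).re, (g z).re)) (E : ℂ →L[ℝ] ℝ × ℝ) p := by
    exact (Complex.reCLM.hasFDerivAt.comp p hF).prodMk (Complex.reCLM.hasFDerivAt.comp p hG)
  have hψd : HasFDerivAt ψ (E.symm : ℝ × ℝ →L[ℝ] ℂ) ((f p).re, (g p).re) := by
    refine HasFDerivAt.of_local_left_inverse (f := fun z : ℂ => ((f z).re, (g z).re)) hψc ?_ ?_
    · rw [hψp]; exact hAχ
    · exact Filter.eventually_of_mem (hW.mem_nhds hxW) hψχ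
  set B : ℂ →L[ℝ] ℝ × ℝ := (-(Complex.imCLM.comp G)).prod (Complex.imCLM.comp F) with hBdef
  have hB : HasFDerivAt (fun z : ℂ => (-(g z).im, (f z).im)) B p :=
    ((Complex.imCLM.hasFDerivAt.comp p hG).neg).prodMk (Complex.imCLM.hasFDerivAt.comp p hF)
  refine ⟨B.comp (E.symm : ℝ × ℝ →L[ℝ] ℂ), ?_, ?_, ?_, ?_, ?_⟩
  · exact (hψp ▸ hB : HasFDerivAt _ B (ψ ((f p).re, (g p).re))).comp _ hψd
  · intro v
    have hEs : (E.symm : ℝ × ℝ →L[ℝ] ℂ) v = Ainv v := rfl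
    rw [ContinuousLinearMap.comp_apply, hEs, hAinvdef, ronkinAinv_apply]
    have hBapp : ∀ w : ℂ, B w =
        (-(w.re * d + w.im * c), w.re * b + w.im * a) := fun w => by
      have h1 : B w = (-(G w).im, (F w).im) := rfl
      rw [h1, hGapp, hFapp]
      simp [Complex.mul_im, ha, hb, hc, hd]
    rw [hBapp]
    simp only [Matrix.smul_apply, Matrix.cons_val', Matrix.cons_val_zero, Matrix.cons_val_one,
      Matrix.head_cons, Matrix.empty_val', Matrix.cons_val_fin_one, Matrix.head_fin_const,
      smul_eq_mul, hre, him, habs]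
    apply Prod.ext <;> simp <;> field_simp <;> ring
  · have h := Complex.sq_norm (F' / G')
    ext i j
    fin_cases i <;> fin_cases j <;>
      simp [Matrix.transpose_apply, Matrix.smul_apply]
  · rw [Matrix.det_smul, Matrix.det_fin_two_of, Fintype.card_fin]
    have hsq : ‖F' / G'‖ ^ 2 = (F' / G').re ^ 2 + (F' / G').im ^ 2 := by
      rw [Complex.sq_norm, Complex.normSq_apply]; ring
    rw [hsq]
    field_simp
    ring
  · intro ht
    set s := (F' / G').re with hs
    set t := (F' / G').im with htdef
    have hsq : ‖F' / G'‖ ^ 2 = s ^ 2 + t ^ 2 := by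
      rw [Complex.sq_norm, Complex.normSq_apply]; ring
    clear_value s t
    refine Matrix.posDef_iff_dotProduct_mulVec.mpr ⟨?_, ?_⟩
    · ext i j
      fin_cases i <;> fin_cases j <;>
        simp [Matrix.conjTranspose_apply, Matrix.smul_apply]
    · intro x hx
      have hx01 : x 0 ≠ 0 ∨ x 1 ≠ 0 := by
        by_contra h
        push_neg at h
        exact hx (by ext i; fin_cases i <;> simp [h.1, h.2])
      have key : star x ⬝ᵥ ((t⁻¹ • !![1, -s; -s, ‖F' / G'‖ ^ 2]) *ᵥ x) =
          t⁻¹ * ((x 0 - s * x 1) ^ 2 + t ^ 2 * (x 1) ^ 2) := by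
        rw [hsq]
        simp [Matrix.mulVec, dotProduct, Fin.sum_univ_two, Matrix.smul_apply,
          smul_eq_mul]
        ring
      rw [key]
      apply mul_pos (inv_pos.mpr ht)
      rcases eq_or_ne (x 1) 0 with h1 | h1
      · have h0 : x 0 ≠ 0 := by
          rcases hx01 with h | h
          · exact h
          · exact absurd h1 h
        rw [h1]
        have h2 : 0 < (x 0) ^ 2 := lt_of_le_of_ne (sq_nonneg _) (Ne.symm (pow_ne_zero 2 h0))
        have h3 : (0:ℝ) ≤ t ^ 2 * (0:ℝ) ^ 2 := by positivity
        nlinarith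
      · have h1' : 0 < t ^ 2 * (x 1) ^ 2 :=
          mul_pos (pow_pos ht 2) (lt_of_le_of_ne (sq_nonneg _) (Ne.symm (pow_ne_zero 2 h1)))
        have := sq_nonneg (x 0 - s * x 1)
        linarith
end

section
/- Let U ⊆ ℂ be open, f, g : ℂ → ℂ holomorphic on U, p ∈ U with g′(p) ≠ 0 and Im R(p) ≠ 0, where R = f′/g′, and let χ(z) = (Re f(z), Re g(z)). Then there exist an open convex set W ⊆ ℝ² with χ(p) ∈ W, a continuous map ψ : W → U with ψ(χ(p)) = p and χ(ψ(x)) = x for all x ∈ W, and a convex differentiable function G : W → ℝ whose gradient satisfies ∇G(x) = s·(−Im g(ψ(x)), Im f(ψ(x))) for all x ∈ W, where s = 1 if Im R(p) > 0 and s = −1 if Im R(p) < 0. -/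
open Complex

open Set Metric
open scoped ENNReal NNReal Topology

noncomputable section RonkinAux

/-- the `ℝ`-linear map `k ↦ ((a*k).re, (b*k).re)`. -/
def ronkinL (a b : ℂ) : ℂ →L[ℝ] ℝ × ℝ :=
  (Complex.reCLM.comp (((ContinuousLinearMap.mul ℂ ℂ) a).restrictScalars ℝ)).prod
    (Complex.reCLM.comp (((ContinuousLinearMap.mul ℂ ℂ) b).restrictScalars ℝ))

@[simp] lemma ronkinL_apply (a b k : ℂ) : ronkinL a b k = ((a*k).re, (b*k).re) := rfl

lemma ronkinL_injective {a b : ℂ} (h : (a * (starRingEnd ℂ) b).im ≠ 0) :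
    Function.Injective (ronkinL a b) := by
  have h' : a.im * b.re - a.re * b.im ≠ 0 := by
    intro h0; apply h; simp only [Complex.mul_im, Complex.conj_re, Complex.conj_im]; nlinarith [h0]
  intro k k' hkk'
  have h1 : (a * k).re = (a * k').re := congrArg Prod.fst hkk'
  have h2 : (b * k).re = (b * k').re := congrArg Prod.snd hkk'
  simp only [Complex.mul_re] at h1 h2
  have e1 : (a.im * b.re - a.re * b.im) * (k.re - k'.re) = 0 := by
    linear_combination a.im * h2 - b.im * h1
  have e2 : (a.im * b.re - a.re * b.im) * (k.im - k'.im) = 0 := by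
    linear_combination a.re * h2 - b.re * h1
  rcases mul_eq_zero.1 e1 with h0 | h0
  · exact absurd h0 h'
  rcases mul_eq_zero.1 e2 with h0' | h0'
  · exact absurd h0' h'
  exact Complex.ext (by linarith) (by linarith)

/-- `ronkinL` as a continuous linear equivalence when `Im (a * conj b) ≠ 0`. -/
def ronkinE (a b : ℂ) (h : (a * (starRingEnd ℂ) b).im ≠ 0) : ℂ ≃L[ℝ] ℝ × ℝ :=
  (LinearMap.linearEquivOfInjective (ronkinL a b).toLinearMap (ronkinL_injective h)
    (by simp [Complex.finrank_real_complex])).toContinuousLinearEquiv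

@[simp] lemma ronkinE_apply (a b : ℂ) (h : (a * (starRingEnd ℂ) b).im ≠ 0) (k : ℂ) :
    ronkinE a b h k = ((a*k).re, (b*k).re) := rfl

lemma ronkinE_coe (a b : ℂ) (h : (a * (starRingEnd ℂ) b).im ≠ 0) :
    ((ronkinE a b h : ℂ →L[ℝ] ℝ × ℝ)) = ronkinL a b := by
  ext k <;> rfl

lemma ronkin_key (a b k : ℂ) :
    -(b*k).im * (a*k).re + (a*k).im * (b*k).re
      = (a * (starRingEnd ℂ) b).im * Complex.normSq k := by
  simp only [Complex.mul_re, Complex.mul_im, Complex.conj_re, Complex.conj_im,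
    Complex.normSq_apply]
  ring


/-- A function analytic at `p` has a primitive on some ball around `p`. -/
lemma ronkin_exists_primitive {h : ℂ → ℂ} {p : ℂ} (hh : AnalyticAt ℂ h p) :
    ∃ r : ℝ, 0 < r ∧ ∃ F : ℂ → ℂ, ∀ z ∈ Metric.ball p r, HasDerivAt F (h z) z := by
  obtain ⟨q, rr, hq⟩ : ∃ q rr, HasFPowerSeriesOnBall h q p rr := by
    obtain ⟨q, hq⟩ := hh
    obtain ⟨rr, hrr⟩ := hq
    exact ⟨q, rr, hrr⟩
  obtain ⟨r', hr'pos, hr'⟩ : ∃ r' : NNReal, (0 : ℝ≥0∞) < r' ∧ (r' : ℝ≥0∞) < rr :=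
    ENNReal.lt_iff_exists_nnreal_btwn.1 hq.r_pos
  have hr'0 : (0 : ℝ) < r' := by exact_mod_cast ENNReal.coe_pos.1 hr'pos
  set u : ℕ → ℝ := fun n => ‖q n‖ * (r' : ℝ) ^ n with hu_def
  have hu : Summable u := q.summable_norm_mul_pow (hr'.trans_le hq.r_le)
  set gf : ℕ → ℂ → ℂ := fun n z => ((n : ℂ) + 1)⁻¹ * q.coeff n * (z - p) ^ (n + 1) with hgf_def
  set gf' : ℕ → ℂ → ℂ := fun n z => q.coeff n * (z - p) ^ n with hgf'_def
  have hderiv : ∀ n z, HasDerivAt (gf n) (gf' n z) z := by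
    intro n z
    have h1 : HasDerivAt (fun w : ℂ => (w - p) ^ (n + 1))
        (((n : ℂ) + 1) * (z - p) ^ n * 1) z := by
      simpa using (((hasDerivAt_id z).sub_const p).fun_pow (n + 1))
    have := h1.const_mul (((n : ℂ) + 1)⁻¹ * q.coeff n)
    convert this using 1
    · rfl
    · rfl
    have hn : ((n : ℂ) + 1) ≠ 0 := Nat.cast_add_one_ne_zero n
    field_simp [hgf'_def]
    ring
  have hbound : ∀ n z, z ∈ Metric.ball p (r' : ℝ) → ‖gf' n z‖ ≤ u n := by
    intro n z hz
    have hz' : ‖z - p‖ ≤ (r' : ℝ) := by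
      rw [Metric.mem_ball, dist_eq_norm] at hz; exact hz.le
    have hc : ‖q.coeff n‖ ≤ ‖q n‖ := by
      rw [FormalMultilinearSeries.coeff]
      calc ‖q n fun _ => 1‖ ≤ ‖q n‖ * ∏ _i : Fin n, ‖(1 : ℂ)‖ := (q n).le_opNorm _
      _ = ‖q n‖ := by simp
    calc ‖q.coeff n * (z - p) ^ n‖ = ‖q.coeff n‖ * ‖z - p‖ ^ n := by
          rw [norm_mul, norm_pow]
      _ ≤ ‖q n‖ * (r' : ℝ) ^ n := by gcongr
      _ = u n := rfl
  have hsum0 : Summable fun n => gf n p := by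
    apply summable_of_ne_finset_zero (s := ∅)
    intro n _
    simp [hgf_def]
  refine ⟨(r' : ℝ), hr'0, fun z => ∑' n, gf n z, fun z hz => ?_⟩
  have key := hasDerivAt_tsum_of_isPreconnected hu Metric.isOpen_ball
    (convex_ball p (r' : ℝ)).isPreconnected (fun n z _ => hderiv n z) hbound
    (Metric.mem_ball_self hr'0) hsum0 hz
  have hsum : HasSum (fun n => gf' n z) (h z) := by
    have hw : (z - p) ∈ Metric.eball (0 : ℂ) rr := by
      rw [Metric.mem_eball, edist_zero_right]
      have h1 : ‖z - p‖₊ < r' := by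
        rw [← NNReal.coe_lt_coe, coe_nnnorm, ← dist_eq_norm]
        exact hz
      exact lt_trans (by exact_mod_cast h1) hr'
    have := hq.hasSum hw
    simp only [FormalMultilinearSeries.apply_eq_pow_smul_coeff, smul_eq_mul] at this
    have h2 : p + (z - p) = z := by ring
    rw [h2] at this
    convert this using 2 with n
    · rfl
    rw [hgf'_def]; ring
  rw [← hsum.tsum_eq]
  exact key


lemma ronkin_lineMap_mem {W : Set (ℝ × ℝ)} (hWc : Convex ℝ W) {a b : ℝ × ℝ}
    (ha : a ∈ W) (hb : b ∈ W) {t : ℝ} (ht : t ∈ Icc (0:ℝ) 1) : a + t • (b - a) ∈ W := by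
  have h1 : (1 - t) • a + t • b ∈ W := hWc ha hb (by linarith [ht.2]) ht.1 (by ring)
  have h2 : a + t • (b - a) = (1 - t) • a + t • b := by module
  rwa [h2]

lemma ronkin_grad_mono {W : Set (ℝ × ℝ)} (hWc : Convex ℝ W) {V : ℝ × ℝ → ℝ × ℝ}
    (hV : ∀ x ∈ W, ∃ N : ℝ × ℝ →L[ℝ] ℝ × ℝ, HasFDerivAt V N x ∧
      ∀ h : ℝ × ℝ, 0 ≤ (N h).1 * h.1 + (N h).2 * h.2) :
    ∀ a ∈ W, ∀ b ∈ W,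
      0 ≤ ((V b).1 - (V a).1) * (b.1 - a.1) + ((V b).2 - (V a).2) * (b.2 - a.2) := by
  intro a ha b hb
  set c : ℝ → ℝ × ℝ := fun t => a + t • (b - a) with hc_def
  have hcd : ∀ t : ℝ, HasDerivAt c (b - a) t := by
    intro t
    simpa [hc_def] using ((hasDerivAt_id t).smul_const (b - a)).const_add a
  set ζ : ℝ → ℝ := fun t => (V (c t)).1 * (b - a).1 + (V (c t)).2 * (b - a).2 with hζ_def
  have hder : ∀ t ∈ Icc (0:ℝ) 1, ∃ d : ℝ, HasDerivAt ζ d t ∧ 0 ≤ d := by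
    intro t ht
    obtain ⟨N, hN, hpsd⟩ := hV (c t) (ronkin_lineMap_mem hWc ha hb ht)
    have hVc : HasDerivAt (fun s => V (c s)) (N (b - a)) t := hN.comp_hasDerivAt t (hcd t)
    have h1 : HasDerivAt (fun s => (V (c s)).1) ((N (b - a)).1) t :=
      (ContinuousLinearMap.fst ℝ ℝ ℝ).hasFDerivAt.comp_hasDerivAt t hVc
    have h2 : HasDerivAt (fun s => (V (c s)).2) ((N (b - a)).2) t :=
      (ContinuousLinearMap.snd ℝ ℝ ℝ).hasFDerivAt.comp_hasDerivAt t hVc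
    exact ⟨_, (h1.mul_const _).add (h2.mul_const _), hpsd _⟩
  have key : MonotoneOn ζ (Icc 0 1) := by
    apply monotoneOn_of_deriv_nonneg (convex_Icc 0 1)
    · intro t ht
      obtain ⟨d, hd, _⟩ := hder t ht
      exact hd.continuousAt.continuousWithinAt
    · intro t ht
      rw [interior_Icc] at ht
      obtain ⟨d, hd, _⟩ := hder t (Ioo_subset_Icc_self ht)
      exact hd.differentiableAt.differentiableWithinAt
    · intro t ht
      rw [interior_Icc] at ht
      obtain ⟨d, hd, hd0⟩ := hder t (Ioo_subset_Icc_self ht)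
      rw [hd.deriv]; exact hd0
  have h01 : ζ 0 ≤ ζ 1 :=
    key (left_mem_Icc.2 zero_le_one) (right_mem_Icc.2 zero_le_one) zero_le_one
  have hc0 : c 0 = a := by simp [hc_def]
  have hc1 : c 1 = b := by simp [hc_def]
  rw [hζ_def] at h01
  simp only [hc0, hc1, Prod.fst_sub, Prod.snd_sub] at h01
  nlinarith [h01]

lemma ronkin_convexOn {W : Set (ℝ × ℝ)} (hWc : Convex ℝ W) {G : ℝ × ℝ → ℝ} {V1 V2 : ℝ × ℝ → ℝ}
    (hG : ∀ x ∈ W, HasFDerivAt G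
      (V1 x • ContinuousLinearMap.fst ℝ ℝ ℝ + V2 x • ContinuousLinearMap.snd ℝ ℝ ℝ) x)
    (hmono : ∀ a ∈ W, ∀ b ∈ W,
      0 ≤ (V1 b - V1 a) * (b.1 - a.1) + (V2 b - V2 a) * (b.2 - a.2)) :
    ConvexOn ℝ W G := by
  refine ⟨hWc, ?_⟩
  intro x hx y hy α β hα hβ hαβ
  set c : ℝ → ℝ × ℝ := fun t => x + t • (y - x) with hc_def
  have hcd : ∀ t : ℝ, HasDerivAt c (y - x) t := by
    intro t
    simpa [hc_def] using ((hasDerivAt_id t).smul_const (y - x)).const_add x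
  set φ : ℝ → ℝ := fun t => G (c t) with hφ_def
  have hφd : ∀ t ∈ Icc (0:ℝ) 1,
      HasDerivAt φ (V1 (c t) * (y - x).1 + V2 (c t) * (y - x).2) t := by
    intro t ht
    have := (hG (c t) (ronkin_lineMap_mem hWc hx hy ht)).comp_hasDerivAt t (hcd t)
    simpa [hφ_def, Function.comp_def, ContinuousLinearMap.add_apply, ContinuousLinearMap.smul_apply,
      smul_eq_mul] using this
  have hφconv : ConvexOn ℝ (Icc (0:ℝ) 1) φ := by
    apply MonotoneOn.convexOn_of_deriv (convex_Icc 0 1)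
    · intro t ht; exact (hφd t ht).continuousAt.continuousWithinAt
    · intro t ht
      rw [interior_Icc] at ht
      exact (hφd t (Ioo_subset_Icc_self ht)).differentiableAt.differentiableWithinAt
    · intro t ht t' ht' htt'
      rw [interior_Icc] at ht ht'
      rw [(hφd t (Ioo_subset_Icc_self ht)).deriv, (hφd t' (Ioo_subset_Icc_self ht')).deriv]
      have hm := hmono (c t) (ronkin_lineMap_mem hWc hx hy (Ioo_subset_Icc_self ht))
        (c t') (ronkin_lineMap_mem hWc hx hy (Ioo_subset_Icc_self ht'))
      have hd1 : (c t').1 - (c t).1 = (t' - t) * (y - x).1 := by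
        simp [hc_def]; ring
      have hd2 : (c t').2 - (c t).2 = (t' - t) * (y - x).2 := by
        simp [hc_def]; ring
      rw [hd1, hd2] at hm
      rcases htt'.lt_or_eq with h | h
      · nlinarith [hm, h]
      · rw [h]
  have h01 := hφconv.2 (left_mem_Icc.2 zero_le_one) (right_mem_Icc.2 zero_le_one) hα hβ hαβ
  have hc0 : c 0 = x := by simp [hc_def]
  have hc1 : c 1 = y := by simp [hc_def]
  have hcβ : c β = α • x + β • y := by
    simp only [hc_def]
    have : α = 1 - β := by linarith
    rw [this]; module
  simpa [hφ_def, hc0, hc1, hcβ, smul_eq_mul] using h01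


end RonkinAux

/-- Local convex generating function for the generalized Ronkin function: with
`R = f'/g'` and `χ(z) = (Re f z, Re g z)`, if `g'(p) ≠ 0` and `Im R(p) ≠ 0` then on a
convex open neighborhood `W` of `χ(p)` there is a continuous local right inverse `ψ` of
`χ` and a convex differentiable function `G` with
`∇G(x) = sgn(Im R(p)) • (−Im g(ψ x), Im f(ψ x))`. -/
theorem exists_local_convex_generating_function
    (U : Set ℂ) (hU : IsOpen U) (f g : ℂ → ℂ)
    (hf : DifferentiableOn ℂ f U) (hg : DifferentiableOn ℂ g U)
    (p : ℂ) (hp : p ∈ U) (hg' : deriv g p ≠ 0)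
    (hR : (deriv f p / deriv g p).im ≠ 0) :
    ∃ (W : Set (ℝ × ℝ)) (ψ : ℝ × ℝ → ℂ) (G : ℝ × ℝ → ℝ),
      IsOpen W ∧ Convex ℝ W ∧ ((f p).re, (g p).re) ∈ W ∧
      ContinuousOn ψ W ∧ (∀ x ∈ W, ψ x ∈ U) ∧
      ψ ((f p).re, (g p).re) = p ∧
      (∀ x ∈ W, ((f (ψ x)).re, (g (ψ x)).re) = x) ∧
      ConvexOn ℝ W G ∧
      (∀ x ∈ W,
        HasFDerivAt G
          (((if 0 < (deriv f p / deriv g p).im then (1 : ℝ) else -1) * (-(g (ψ x)).im)) •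
              ContinuousLinearMap.fst ℝ ℝ ℝ +
            ((if 0 < (deriv f p / deriv g p).im then (1 : ℝ) else -1) * (f (ψ x)).im) •
              ContinuousLinearMap.snd ℝ ℝ ℝ) x) := by
  set s : ℝ := if 0 < (deriv f p / deriv g p).im then (1 : ℝ) else -1 with hs_def
  have hsmulR : 0 < s * (deriv f p / deriv g p).im := by
    rw [hs_def]
    split_ifs with h
    · simpa using h
    · have h1 : (deriv f p / deriv g p).im < 0 := lt_of_le_of_ne (not_lt.1 h) hR
      nlinarith
  -- the sign-weighted Jacobian determinant
  set P : ℂ → ℝ := fun z => s * (deriv f z * (starRingEnd ℂ) (deriv g z)).im with hP_def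
  have hPp : 0 < P p := by
    have hfg : deriv f p = (deriv f p / deriv g p) * deriv g p := by
      field_simp
    have h1 : (deriv f p * (starRingEnd ℂ) (deriv g p)).im
        = (deriv f p / deriv g p).im * Complex.normSq (deriv g p) := by
      conv_lhs => rw [hfg]
      rw [mul_assoc, Complex.mul_conj]
      simp [Complex.mul_im]
    rw [hP_def]
    simp only
    rw [h1]
    have h2 : 0 < Complex.normSq (deriv g p) := Complex.normSq_pos.2 hg'
    nlinarith
  have hne : ∀ z : ℂ, 0 < P z → (deriv f z * (starRingEnd ℂ) (deriv g z)).im ≠ 0 := by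
    intro z hz h0
    rw [hP_def] at hz
    simp only [h0, mul_zero] at hz
    exact lt_irrefl 0 hz
  -- analyticity
  have hfa : AnalyticOnNhd ℂ f U := hf.analyticOnNhd hU
  have hga : AnalyticOnNhd ℂ g U := hg.analyticOnNhd hU
  have hfda : AnalyticOnNhd ℂ (deriv f) U := hfa.deriv
  have hgda : AnalyticOnNhd ℂ (deriv g) U := hga.deriv
  -- the set where the Jacobian is positive (with sign s)
  have hPcont : ContinuousOn P U := by
    apply continuousOn_const.mul
    apply Complex.continuous_im.comp_continuousOn
    exact hfda.continuousOn.mul (continuous_star.comp_continuousOn hgda.continuousOn)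
  have hVopen : IsOpen (U ∩ P ⁻¹' Ioi 0) := hPcont.isOpen_inter_preimage hU isOpen_Ioi
  -- χ and its strict derivative
  set χ : ℂ → ℝ × ℝ := fun z => ((f z).re, (g z).re) with hχ_def
  have hχs : ∀ z ∈ U, HasStrictFDerivAt χ (ronkinL (deriv f z) (deriv g z)) z := by
    intro z hz
    have h1 : HasStrictDerivAt f (deriv f z) z := by
      obtain ⟨q, hq⟩ := hfa z hz
      have := hq.hasStrictDerivAt
      rwa [← hq.deriv] at this
    have h2 : HasStrictDerivAt g (deriv g z) z := by
      obtain ⟨q, hq⟩ := hga z hz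
      have := hq.hasStrictDerivAt
      rwa [← hq.deriv] at this
    have h1' := (h1.hasStrictFDerivAt.restrictScalars ℝ)
    have h2' := (h2.hasStrictFDerivAt.restrictScalars ℝ)
    have h3 := ((Complex.reCLM.hasStrictFDerivAt.comp z h1').prodMk
      (Complex.reCLM.hasStrictFDerivAt.comp z h2'))
    convert h3 using 1
    · rfl
    · rfl
    apply ContinuousLinearMap.ext
    intro k
    apply Prod.ext <;>
      simp [ronkinL, mul_comm]
  have hnep : (deriv f p * (starRingEnd ℂ) (deriv g p)).im ≠ 0 := hne p hPp
  have hχp : HasStrictFDerivAt χ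
      ((ronkinE (deriv f p) (deriv g p) hnep : ℂ →L[ℝ] ℝ × ℝ)) p := by
    rw [ronkinE_coe]; exact hχs p hp
  set Φ := hχp.toOpenPartialHomeomorph χ with hΦ_def
  have hΦcoe : ⇑Φ = χ := rfl
  have hsrc : p ∈ Φ.source := hχp.mem_toOpenPartialHomeomorph_source
  -- primitive of g · f′
  have hFan : AnalyticAt ℂ (fun z => g z * deriv f z) p := (hga p hp).mul (hfda p hp)
  obtain ⟨r1, hr1, F, hF⟩ := ronkin_exists_primitive hFan
  -- the good neighborhood upstairs
  set S : Set ℂ := (U ∩ P ⁻¹' Ioi 0) ∩ (Metric.ball p r1 ∩ Φ.source) with hS_def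
  have hSopen : IsOpen S := (hVopen.inter (Metric.isOpen_ball.inter Φ.open_source))
  have hpS : p ∈ S := ⟨⟨hp, hPp⟩, Metric.mem_ball_self hr1, hsrc⟩
  -- the good neighborhood downstairs
  set T : Set (ℝ × ℝ) := Φ.target ∩ Φ.symm ⁻¹' S with hT_def
  have hTopen : IsOpen T := Φ.isOpen_inter_preimage_symm hSopen
  have hχpT : χ p ∈ T := by
    constructor
    · exact hχp.image_mem_toOpenPartialHomeomorph_target
    · show Φ.symm (χ p) ∈ S
      rw [show χ p = Φ p from rfl, Φ.left_inv hsrc]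
      exact hpS
  obtain ⟨ε, hε, hball⟩ := Metric.isOpen_iff.1 hTopen (χ p) hχpT
  set W : Set (ℝ × ℝ) := Metric.ball (χ p) ε with hW_def
  set ψ : ℝ × ℝ → ℂ := ⇑Φ.symm with hψ_def
  set G : ℝ × ℝ → ℝ := fun x => s * ((g (ψ x)).re * (f (ψ x)).im - (F (ψ x)).im) with hG_def
  have hWT : ∀ x ∈ W, x ∈ Φ.target := fun x hx => (hball hx).1
  have hWS : ∀ x ∈ W, ψ x ∈ S := fun x hx => (hball hx).2
  -- derivative of ψ
  have hψd : ∀ x, ∀ hx : x ∈ W, HasFDerivAt ψ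
      (((ronkinE (deriv f (ψ x)) (deriv g (ψ x)) (hne _ (hWS x hx).1.2)).symm :
        ℝ × ℝ →L[ℝ] ℂ)) x := by
    intro x hx
    apply Φ.hasFDerivAt_symm (hWT x hx)
    rw [ronkinE_coe]
    exact (hχs _ (hWS x hx).1.1).hasFDerivAt
  -- the gradient of G
  have hGrad : ∀ x, ∀ hx : x ∈ W, HasFDerivAt G
      ((s * (-(g (ψ x)).im)) • ContinuousLinearMap.fst ℝ ℝ ℝ +
        (s * (f (ψ x)).im) • ContinuousLinearMap.snd ℝ ℝ ℝ) x := by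
    intro x hx
    have hzS := hWS x hx
    have hzU : ψ x ∈ U := hzS.1.1
    have hzP : 0 < P (ψ x) := hzS.1.2
    have hzb : ψ x ∈ Metric.ball p r1 := hzS.2.1
    have hfd : HasFDerivAt f
        (((1 : ℂ →L[ℂ] ℂ).smulRight (deriv f (ψ x))).restrictScalars ℝ) (ψ x) :=
      ((hf.differentiableAt (hU.mem_nhds hzU)).hasDerivAt.hasFDerivAt).restrictScalars ℝ
    have hgd : HasFDerivAt g
        (((1 : ℂ →L[ℂ] ℂ).smulRight (deriv g (ψ x))).restrictScalars ℝ) (ψ x) :=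
      ((hg.differentiableAt (hU.mem_nhds hzU)).hasDerivAt.hasFDerivAt).restrictScalars ℝ
    have hFd : HasFDerivAt F
        (((1 : ℂ →L[ℂ] ℂ).smulRight (g (ψ x) * deriv f (ψ x))).restrictScalars ℝ) (ψ x) :=
      ((hF (ψ x) hzb).hasFDerivAt).restrictScalars ℝ
    have hgre := Complex.reCLM.hasFDerivAt.comp (ψ x) hgd
    have hfim := Complex.imCLM.hasFDerivAt.comp (ψ x) hfd
    have hFim := Complex.imCLM.hasFDerivAt.comp (ψ x) hFd
    have hGt := ((hgre.mul hfim).sub hFim).const_mul s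
    have hcomp := hGt.comp x (hψd x hx)
    refine hcomp.congr_fderiv ?_
    apply ContinuousLinearMap.ext
    intro h
    obtain ⟨k, rfl⟩ := (ronkinE (deriv f (ψ x)) (deriv g (ψ x)) (hne _ hzP)).surjective h
    simp only [ContinuousLinearMap.coe_comp', Function.comp_apply,
      ContinuousLinearEquiv.coe_coe, ContinuousLinearEquiv.symm_apply_apply]
    simp only [ContinuousLinearMap.add_apply, ContinuousLinearMap.smul_apply,
      ContinuousLinearMap.sub_apply, ContinuousLinearMap.coe_fst',
      ContinuousLinearMap.coe_snd', ContinuousLinearMap.coe_restrictScalars',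
      ContinuousLinearMap.smulRight_apply, ContinuousLinearMap.one_apply,
      Complex.reCLM_apply, Complex.imCLM_apply, smul_eq_mul, ronkinE_apply,
      ContinuousLinearMap.coe_comp', Function.comp_apply]
    simp only [Complex.mul_re, Complex.mul_im, Complex.sub_im, Complex.sub_re,
      Complex.smul_re, Complex.smul_im, smul_eq_mul]
    ring
  -- monotonicity data for the gradient field
  have hVmono : ∀ x, ∀ hx : x ∈ W, ∃ N : ℝ × ℝ →L[ℝ] ℝ × ℝ,
      HasFDerivAt (fun y => ((s * (-(g (ψ y)).im), s * (f (ψ y)).im) : ℝ × ℝ)) N x ∧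
      ∀ h : ℝ × ℝ, 0 ≤ (N h).1 * h.1 + (N h).2 * h.2 := by
    intro x hx
    have hzS := hWS x hx
    have hzU : ψ x ∈ U := hzS.1.1
    have hzP : 0 < P (ψ x) := hzS.1.2
    have hfd : HasFDerivAt f
        (((1 : ℂ →L[ℂ] ℂ).smulRight (deriv f (ψ x))).restrictScalars ℝ) (ψ x) :=
      ((hf.differentiableAt (hU.mem_nhds hzU)).hasDerivAt.hasFDerivAt).restrictScalars ℝ
    have hgd : HasFDerivAt g
        (((1 : ℂ →L[ℂ] ℂ).smulRight (deriv g (ψ x))).restrictScalars ℝ) (ψ x) :=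
      ((hg.differentiableAt (hU.mem_nhds hzU)).hasDerivAt.hasFDerivAt).restrictScalars ℝ
    have him_g := Complex.imCLM.hasFDerivAt.comp (ψ x) hgd
    have him_f := Complex.imCLM.hasFDerivAt.comp (ψ x) hfd
    have hpair := ((him_g.neg).const_mul s).prodMk (him_f.const_mul s)
    have hcomp := hpair.comp x (hψd x hx)
    refine ⟨_, hcomp, ?_⟩
    intro h
    obtain ⟨k, rfl⟩ := (ronkinE (deriv f (ψ x)) (deriv g (ψ x)) (hne _ hzP)).surjective h
    have key := ronkin_key (deriv f (ψ x)) (deriv g (ψ x)) k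
    have hP' : 0 < s * (deriv f (ψ x) * (starRingEnd ℂ) (deriv g (ψ x))).im := hzP
    simp only [ContinuousLinearMap.coe_comp', Function.comp_apply,
      ContinuousLinearEquiv.coe_coe, ContinuousLinearEquiv.symm_apply_apply]
    simp only [ContinuousLinearMap.prod_apply, ContinuousLinearMap.neg_apply,
      ContinuousLinearMap.smul_apply, ContinuousLinearMap.coe_restrictScalars',
      ContinuousLinearMap.smulRight_apply, ContinuousLinearMap.one_apply,
      Complex.imCLM_apply, smul_eq_mul, ronkinE_apply, Prod.fst, Prod.snd,
      ContinuousLinearMap.coe_comp']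
    have hP2 : 0 ≤ (s * (deriv f (ψ x) * (starRingEnd ℂ) (deriv g (ψ x))).im)
        * Complex.normSq k := mul_nonneg hP'.le (Complex.normSq_nonneg k)
    simp only [Function.comp_apply, ContinuousLinearMap.smulRight_apply,
      ContinuousLinearMap.one_apply, Complex.imCLM_apply, smul_eq_mul]
    simp only [Complex.mul_im, Complex.mul_re, Complex.normSq_apply,
      Complex.conj_re, Complex.conj_im] at hP2 ⊢
    nlinarith [hP2]
  -- convexity
  have hconv : ConvexOn ℝ W G := by
    refine ronkin_convexOn (convex_ball _ _)
      (V1 := fun y => s * (-(g (ψ y)).im)) (V2 := fun y => s * (f (ψ y)).im)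
      (fun x hx => hGrad x hx) ?_
    intro a ha b hb
    exact ronkin_grad_mono (convex_ball _ _) (fun x hx => hVmono x hx) a ha b hb
  exact ⟨W, ψ, G, Metric.isOpen_ball, convex_ball _ _, Metric.mem_ball_self hε,
    Φ.symm.continuousOn.mono (fun x hx => hWT x hx), fun x hx => (hWS x hx).1.1,
    Φ.left_inv hsrc, fun x hx => Φ.right_inv (hWT x hx), hconv, fun x hx => hGrad x hx⟩
end

section
/- Let τ, ψ : ℤ × ℤ → ℂ with τ(m+1,n) ≠ 0 and τ(m,n+1) ≠ 0 for all (m,n) ∈ ℤ², define u(m,n) = τ(m+1,n+1)·τ(m,n) / (τ(m+1,n)·τ(m,n+1)) and Ψ(m,n) = (−1)ⁿ·τ(m,n)·ψ(m,n). Then ψ satisfies ψ(m,n+1) = ψ(m+1,n) + u(m,n)·ψ(m,n) for all (m,n) if and only if Ψ satisfies τ(m+1,n)·Ψ(m,n+1) + τ(m,n+1)·Ψ(m+1,n) + τ(m+1,n+1)·Ψ(m,n) = 0 for all (m,n). -/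
/-- Gauge transformation to the bilinear form: with
`u(m,n) = τ(m+1,n+1)τ(m,n)/(τ(m+1,n)τ(m,n+1))` and `Ψ(m,n) = (−1)ⁿ τ(m,n) ψ(m,n)`,
the equation `ψ(m,n+1) = ψ(m+1,n) + u(m,n) ψ(m,n)` holds for all `(m,n)` iff
`τ(m+1,n) Ψ(m,n+1) + τ(m,n+1) Ψ(m+1,n) + τ(m+1,n+1) Ψ(m,n) = 0` for all `(m,n)`. -/
theorem gauge_transform_bilinear
    (τ ψ : ℤ × ℤ → ℂ)
    (h1 : ∀ m n : ℤ, τ (m + 1, n) ≠ 0)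
    (h2 : ∀ m n : ℤ, τ (m, n + 1) ≠ 0) :
    (∀ m n : ℤ,
        ψ (m, n + 1) =
          ψ (m + 1, n) +
            τ (m + 1, n + 1) * τ (m, n) / (τ (m + 1, n) * τ (m, n + 1)) * ψ (m, n)) ↔
      (∀ m n : ℤ,
        τ (m + 1, n) * ((-1 : ℂ) ^ (n + 1) * τ (m, n + 1) * ψ (m, n + 1)) +
            τ (m, n + 1) * ((-1 : ℂ) ^ n * τ (m + 1, n) * ψ (m + 1, n)) +
            τ (m + 1, n + 1) * ((-1 : ℂ) ^ n * τ (m, n) * ψ (m, n)) = 0) := by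
  have key : ∀ m n : ℤ, ((-1 : ℂ) ^ (n + 1) : ℂ) = (-1 : ℂ) ^ n * (-1) := by
    intro m n
    rw [zpow_add₀ (by norm_num : (-1 : ℂ) ≠ 0)]
    simp
  constructor
  · intro h m n
    have ha := h1 m n
    have hb := h2 m n
    have heq := h m n
    rw [key m n]
    field_simp at heq ⊢
    linear_combination -((-1:ℂ) ^ n) * heq
  · intro h m n
    have ha := h1 m n
    have hb := h2 m n
    have heq := h m n
    rw [key m n] at heq
    have hne : ((-1 : ℂ) ^ n) ≠ 0 := zpow_ne_zero _ (by norm_num)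
    have hA : -(τ (m + 1, n) * τ (m, n + 1) * ψ (m, n + 1)) +
        τ (m, n + 1) * τ (m + 1, n) * ψ (m + 1, n) +
        τ (m + 1, n + 1) * τ (m, n) * ψ (m, n) = 0 := by
      apply mul_left_cancel₀ hne
      rw [mul_zero]
      linear_combination heq
    field_simp
    linear_combination -hA
end
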